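/- Let φ(u,s) = (√(1 − u + s²) + s)/(1 − u) on the open set {(u,s) ∈ ℝ² : 0 ≤ s² ≤ u < 1} (where φ > 0), and set ψ := (φ₂ + 2s·φ₁)/(2φ). Then ψ² − (ψ₂ + 2s·ψ₁) = −(1/4)·φ². Equivalently, φ satisfies the Einstein PDE (∗∗) with μ = 0 and κ = −4K for every real K. -/

import Mathlib

/-- First partial derivative of `f = f(u,s)` with respect to `u`. -/
noncomputable def pd1 (f : ℝ → ℝ → ℝ) (u s : ℝ) : ℝ := deriv (fun t => f t s) u

/-- First partial derivative of `f = f(u,s)` with respect to `s`. -/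
noncomputable def pd2 (f : ℝ → ℝ → ℝ) (u s : ℝ) : ℝ := deriv (f u) s

/-- `ψ := (φ₂ + 2s·φ₁)/(2φ)`. -/
noncomputable def psi (f : ℝ → ℝ → ℝ) (u s : ℝ) : ℝ :=
  (pd2 f u s + 2 * s * pd1 f u s) / (2 * f u s)

/-- The defining function of a Randers metric in navigation form. -/
noncomputable def phi (u s : ℝ) : ℝ := (Real.sqrt (1 - u + s ^ 2) + s) / (1 - u)

lemma hApos (u s : ℝ) (hu : u < 1) : 0 < 1 - u + s ^ 2 := by nlinarith [sq_nonneg s]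

lemma phi_hasDeriv_u (u s : ℝ) (hu : u < 1) :
    HasDerivAt (fun t => phi t s)
      ((1 / (2 * Real.sqrt (1 - u + s ^ 2)) * (-1) * (1 - u)
        - (Real.sqrt (1 - u + s ^ 2) + s) * (-1)) / (1 - u) ^ 2) u := by
  have h1 : HasDerivAt (fun t : ℝ => 1 - t + s ^ 2) (-1) u := by
    simpa using ((hasDerivAt_id u).const_sub 1).add_const (s ^ 2)
  have h2 : HasDerivAt (fun t : ℝ => Real.sqrt (1 - t + s ^ 2))
      (1 / (2 * Real.sqrt (1 - u + s ^ 2)) * (-1)) u :=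
    (Real.hasDerivAt_sqrt (ne_of_gt (hApos u s hu))).comp u h1
  have h3 : HasDerivAt (fun t : ℝ => Real.sqrt (1 - t + s ^ 2) + s)
      (1 / (2 * Real.sqrt (1 - u + s ^ 2)) * (-1)) u := h2.add_const s
  have h4 : HasDerivAt (fun t : ℝ => 1 - t) (-1) u := by
    simpa using (hasDerivAt_id u).const_sub 1
  exact h3.div h4 (by linarith)

lemma phi_hasDeriv_s (u s : ℝ) (hu : u < 1) :
    HasDerivAt (phi u)
      ((1 / (2 * Real.sqrt (1 - u + s ^ 2)) * (2 * s) + 1) / (1 - u)) s := by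
  have h1 : HasDerivAt (fun x : ℝ => 1 - u + x ^ 2) (2 * s) s := by
    simpa using (hasDerivAt_pow 2 s).const_add (1 - u)
  have h2 : HasDerivAt (fun x : ℝ => Real.sqrt (1 - u + x ^ 2))
      (1 / (2 * Real.sqrt (1 - u + s ^ 2)) * (2 * s)) s :=
    (Real.hasDerivAt_sqrt (ne_of_gt (hApos u s hu))).comp s h1
  have h3 : HasDerivAt (fun x : ℝ => Real.sqrt (1 - u + x ^ 2) + x)
      (1 / (2 * Real.sqrt (1 - u + s ^ 2)) * (2 * s) + 1) s :=
    h2.add (hasDerivAt_id s)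
  exact h3.div_const (1 - u)

lemma sqrt_facts (u s : ℝ) (hu : u < 1) :
    0 < Real.sqrt (1 - u + s ^ 2) ∧ Real.sqrt (1 - u + s ^ 2) ^ 2 = 1 - u + s ^ 2
    ∧ -s < Real.sqrt (1 - u + s ^ 2) := by
  have h := hApos u s hu
  have h1 : 0 < Real.sqrt (1 - u + s ^ 2) := Real.sqrt_pos.mpr h
  have h2 : Real.sqrt (1 - u + s ^ 2) ^ 2 = 1 - u + s ^ 2 := Real.sq_sqrt h.le
  refine ⟨h1, h2, ?_⟩
  nlinarith [abs_nonneg s, sq_abs s, Real.sqrt_lt_sqrt (sq_nonneg s) (show s^2 < 1-u+s^2 by linarith), Real.sqrt_sq_eq_abs s, neg_abs_le s]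

lemma phi_pos (u s : ℝ) (hu : u < 1) : 0 < phi u s := by
  obtain ⟨h1, h2, h3⟩ := sqrt_facts u s hu
  have : 0 < 1 - u := by linarith
  unfold phi
  exact div_pos (by linarith) (by linarith)

lemma psi_eq (u s : ℝ) (hu : u < 1) : psi phi u s = phi u s / 2 := by
  obtain ⟨h1, h2, h3⟩ := sqrt_facts u s hu
  have h1u : (0:ℝ) < 1 - u := by linarith
  have hp := phi_pos u s hu
  have e1 : pd1 phi u s = (1 / (2 * Real.sqrt (1 - u + s ^ 2)) * (-1) * (1 - u)
        - (Real.sqrt (1 - u + s ^ 2) + s) * (-1)) / (1 - u) ^ 2 :=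
    (phi_hasDeriv_u u s hu).deriv
  have e2 : pd2 phi u s = (1 / (2 * Real.sqrt (1 - u + s ^ 2)) * (2 * s) + 1) / (1 - u) :=
    (phi_hasDeriv_s u s hu).deriv
  unfold psi
  rw [e1, e2]
  unfold phi
  set a := Real.sqrt (1 - u + s ^ 2) with ha
  have hane : a ≠ 0 := ne_of_gt h1
  have hase : a + s ≠ 0 := by linarith
  field_simp
  linear_combination (-a) * h2

lemma pd2_psi (u s : ℝ) (hu : u < 1) : pd2 (psi phi) u s = pd2 phi u s / 2 := by
  have : psi phi u = fun x => phi u x / 2 := funext fun x => psi_eq u x hu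
  unfold pd2
  rw [this]
  exact ((phi_hasDeriv_s u s hu).div_const 2).deriv.trans
    (by rw [(phi_hasDeriv_s u s hu).deriv])

lemma pd1_psi (u s : ℝ) (hu : u < 1) : pd1 (psi phi) u s = pd1 phi u s / 2 := by
  unfold pd1
  have hev : (fun t => psi phi t s) =ᶠ[nhds u] (fun t => phi t s / 2) := by
    filter_upwards [IsOpen.mem_nhds (isOpen_lt continuous_id continuous_const)
      (show u ∈ {t : ℝ | t < 1} from hu)] with t ht
    exact psi_eq t s ht
  rw [hev.deriv_eq]
  exact ((phi_hasDeriv_u u s hu).div_const 2).deriv.trans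
    (by rw [(phi_hasDeriv_u u s hu).deriv])

/-- For `φ(u,s) = (√(1 − u + s²) + s)/(1 − u)` on `{0 ≤ s² ≤ u < 1}`, with
`ψ := (φ₂ + 2s·φ₁)/(2φ)`, one has `ψ² − (ψ₂ + 2s·ψ₁) = −(1/4)·φ²`; equivalently,
φ satisfies the Einstein PDE (∗∗) with `μ = 0` and `κ = −4K` for every real `K`. -/
theorem stmt_3 : ∀ u s : ℝ, s ^ 2 ≤ u → u < 1 →
    ((psi phi u s) ^ 2 - (pd2 (psi phi) u s + 2 * s * pd1 (psi phi) u s)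
        = -(1/4) * (phi u s) ^ 2
      ∧ ∀ K : ℝ, (-4 * K - 0 * u) *
          ((psi phi u s) ^ 2 - (pd2 (psi phi) u s + 2 * s * pd1 (psi phi) u s))
          + 0 * s * psi phi u s + 0 = K * (phi u s) ^ 2) := by
  intro u s _ hu
  have hp := phi_pos u s hu
  have key : (psi phi u s) ^ 2 - (pd2 (psi phi) u s + 2 * s * pd1 (psi phi) u s)
      = -(1/4) * (phi u s) ^ 2 := by
    rw [pd2_psi u s hu, pd1_psi u s hu, psi_eq u s hu]
    have h24 : pd2 phi u s + 2 * s * pd1 phi u s = phi u s ^ 2 := by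
      have := psi_eq u s hu
      unfold psi at this
      field_simp at this
      linarith [this]
    have : pd2 phi u s / 2 + 2 * s * (pd1 phi u s / 2)
        = (pd2 phi u s + 2 * s * pd1 phi u s) / 2 := by ring
    rw [this, h24]; ring
  exact ⟨key, fun K => by rw [key]; ring⟩
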